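/- For every γ > 0, the cubic equation γ y³ − 2γ y² + (γ + 3) y − 1 = 0 has exactly one solution y in the open interval (0, 1). -/
import Mathlib


/-- For every `γ > 0`, the cubic `γy³ − 2γy² + (γ+3)y − 1 = 0` has exactly
one solution `y` in the open interval `(0, 1)`. -/
theorem stmt19 (γ : ℝ) (hγ : 0 < γ) :
    ∃! y : ℝ, y ∈ Set.Ioo (0 : ℝ) 1 ∧
      γ * y ^ 3 - 2 * γ * y ^ 2 + (γ + 3) * y - 1 = 0 := by
  set f : ℝ → ℝ := fun y => γ * y ^ 3 - 2 * γ * y ^ 2 + (γ + 3) * y - 1 with hf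
  -- any root in (0,1) is < 1/3
  have hsmall : ∀ a : ℝ, a ∈ Set.Ioo (0:ℝ) 1 → f a = 0 → a < 1/3 := by
    intro a ha hfa
    by_contra h
    push_neg at h
    have h1 : γ * a * (1 - a)^2 > 0 :=
      mul_pos (mul_pos hγ ha.1) (pow_pos (by linarith [ha.2]) 2)
    have : γ * a * (1 - a)^2 + (3 * a - 1) = 0 := by
      simp only [hf] at hfa; nlinarith [hfa]
    nlinarith
  -- existence via IVT
  have hc : ContinuousOn f (Set.Icc (0:ℝ) (1/3)) := by
    apply Continuous.continuousOn; fun_prop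
  have h0 : f 0 = -1 := by simp [hf]
  have h13 : f (1/3) = 4 * γ / 27 := by simp only [hf]; ring
  have hmem : (0:ℝ) ∈ Set.Ioo (f 0) (f (1/3)) := by
    rw [h0, h13]; constructor <;> [linarith; linarith]
  have hsub := intermediate_value_Ioo (by norm_num : (0:ℝ) ≤ 1/3) hc
  obtain ⟨y, hy, hfy⟩ := hsub hmem
  refine ⟨y, ⟨⟨hy.1, by linarith [hy.2]⟩, hfy⟩, ?_⟩
  rintro b ⟨hb, hfb⟩
  have hb3 : b < 1/3 := hsmall b hb hfb
  have hy3 : y < 1/3 := hy.2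
  have hQ : γ * (b^2 + b*y + y^2) - 2*γ*(b+y) + γ + 3 > 0 := by
    have hg : b^2 + b*y + y^2 - 2*(b+y) + 1 ≥ 0 := by
      nlinarith [sq_nonneg (b + y - 1), hb.1, hy.1]
    nlinarith
  have key : (b - y) * (γ * (b^2 + b*y + y^2) - 2*γ*(b+y) + γ + 3) = 0 := by
    have h1 : f b = 0 := hfb
    have h2 : f y = 0 := hfy
    simp only [hf] at h1 h2
    linear_combination h1 - h2
  have := mul_eq_zero.mp key
  rcases this with h | h
  · linarith
  · linarith
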